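/- Let d ≥ 2 and define S(x) = (1/d) · Σ_{k=1}^d max{x_j : j ≠ k} for x ∈ [0,1]^d. Then the infimum over β ∈ ℝ of sup_{x ∈ [0,1]^d} |max_i x_i − β·S(x)| equals 1/(2d−1), attained at β = 2d/(2d−1). -/

import Mathlib

theorem stmt6 (d : ℕ) (hd : 2 ≤ d)
    (S : (Fin d → ℝ) → ℝ)
    (hS : ∀ x, S x = (1 / (d : ℝ)) *
        ∑ k : Fin d, (Finset.univ.erase k).sup' (Finset.card_pos.mp (by
            rw [Finset.card_erase_of_mem (Finset.mem_univ k), Finset.card_univ,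
              Fintype.card_fin]; omega)) x)
    (E : ℝ → ℝ)
    (hE : ∀ β, E β = ⨆ x : {x : Fin d → ℝ // ∀ i, x i ∈ Set.Icc (0 : ℝ) 1},
        |Finset.univ.sup' (Finset.univ_nonempty_iff.mpr
            (Fin.pos_iff_nonempty.mp (by omega))) x.1 - β * S x.1|) :
    (∀ β : ℝ, 1 / (2 * d - 1) ≤ E β) ∧ E (2 * d / (2 * d - 1)) = 1 / (2 * d - 1) := by
  have hd0 : 0 < d := by omega
  have hne : (Finset.univ : Finset (Fin d)).Nonempty :=
    Finset.univ_nonempty_iff.mpr (Fin.pos_iff_nonempty.mp hd0)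
  have herase : ∀ k : Fin d, (Finset.univ.erase k).Nonempty := fun k =>
    Finset.card_pos.mp (by
      rw [Finset.card_erase_of_mem (Finset.mem_univ k), Finset.card_univ,
        Fintype.card_fin]; omega)
  set D : ℝ := (d : ℝ) with hDdef
  have hD2 : (2:ℝ) ≤ D := by rw [hDdef]; exact_mod_cast hd
  have hc : (0:ℝ) < 2 * D - 1 := by linarith
  have hDpos : (0:ℝ) < D := by linarith
  set M : (Fin d → ℝ) → ℝ := fun x => Finset.univ.sup' hne x with hMdef
  have hS' : ∀ x, S x = (1 / D) *
      ∑ k : Fin d, (Finset.univ.erase k).sup' (herase k) x := hS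
  have hE' : ∀ β, E β = ⨆ x : {x : Fin d → ℝ // ∀ i, x i ∈ Set.Icc (0 : ℝ) 1},
      |M x.1 - β * S x.1| := hE
  -- basic facts about M and S on the cube
  have hfacts : ∀ x : Fin d → ℝ, (∀ i, x i ∈ Set.Icc (0:ℝ) 1) →
      0 ≤ M x ∧ M x ≤ 1 ∧ 0 ≤ S x ∧ S x ≤ 1 ∧
      (D - 1) * M x ≤ D * S x ∧ D * S x ≤ D * M x := by
    intro x hx
    set T := ∑ k : Fin d, (Finset.univ.erase k).sup' (herase k) x with hT
    have hDS : D * S x = T := by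
      rw [hS' x]; field_simp; exact hT.symm
    have hM0 : 0 ≤ M x := le_trans (hx ⟨0, hd0⟩).1 (Finset.le_sup' x (Finset.mem_univ _))
    have hM1 : M x ≤ 1 := Finset.sup'_le _ _ fun i _ => (hx i).2
    have ht0 : ∀ k : Fin d, 0 ≤ (Finset.univ.erase k).sup' (herase k) x := by
      intro k
      obtain ⟨j, hj⟩ := herase k
      exact le_trans (hx j).1 (Finset.le_sup' x hj)
    have htle : ∀ k : Fin d, (Finset.univ.erase k).sup' (herase k) x ≤ M x := fun k =>
      Finset.sup'_le _ _ fun j _ => Finset.le_sup' x (Finset.mem_univ j)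
    have hThi : T ≤ D * M x := by
      calc T ≤ ∑ _k : Fin d, M x := Finset.sum_le_sum fun k _ => htle k
      _ = D * M x := by
          rw [Finset.sum_const, Finset.card_univ, Fintype.card_fin, nsmul_eq_mul]
    have hT0 : 0 ≤ T := Finset.sum_nonneg fun k _ => ht0 k
    have hTlo : (D - 1) * M x ≤ T := by
      obtain ⟨i0, -, hi0⟩ := Finset.exists_mem_eq_sup' hne x
      have hcard : (((Finset.univ : Finset (Fin d)).erase i0).card : ℝ) = D - 1 := by
        rw [Finset.card_erase_of_mem (Finset.mem_univ _), Finset.card_univ, Fintype.card_fin,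
          Nat.cast_sub (by omega : 1 ≤ d)]
        simp [hDdef]
      have h1 : ∀ k ∈ Finset.univ.erase i0,
          M x ≤ (Finset.univ.erase k).sup' (herase k) x := by
        intro k hk
        have hki : i0 ∈ Finset.univ.erase k :=
          Finset.mem_erase.mpr ⟨Ne.symm (Finset.mem_erase.mp hk).1, Finset.mem_univ _⟩
        calc M x = x i0 := hi0
        _ ≤ _ := Finset.le_sup' x hki
      have hsplit : (Finset.univ.erase i0).sup' (herase i0) x +
          ∑ k ∈ Finset.univ.erase i0, (Finset.univ.erase k).sup' (herase k) x = T := by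
        rw [hT]; exact Finset.add_sum_erase Finset.univ
          (fun k => (Finset.univ.erase k).sup' (herase k) x) (Finset.mem_univ i0)
      calc (D - 1) * M x = ∑ _k ∈ Finset.univ.erase i0, M x := by
            rw [Finset.sum_const, nsmul_eq_mul, hcard]
      _ ≤ ∑ k ∈ Finset.univ.erase i0, (Finset.univ.erase k).sup' (herase k) x :=
            Finset.sum_le_sum h1
      _ ≤ T := by
            rw [← hsplit]
            linarith [ht0 i0]
    have hS0 : 0 ≤ S x := by nlinarith
    have hS1 : S x ≤ 1 := by nlinarith
    exact ⟨hM0, hM1, hS0, hS1, by rw [hDS]; exact hTlo, by rw [hDS]; exact hThi⟩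
  -- main upper bound at the optimal β
  have hmain : ∀ x : Fin d → ℝ, (∀ i, x i ∈ Set.Icc (0:ℝ) 1) →
      |M x - (2 * D / (2 * D - 1)) * S x| ≤ 1 / (2 * D - 1) := by
    intro x hx
    obtain ⟨hM0, hM1, hS0, hS1, hlo, hhi⟩ := hfacts x hx
    have e2 : M x - (2 * D / (2 * D - 1)) * S x =
        (M x * (2 * D - 1) - 2 * (D * S x)) / (2 * D - 1) := by
      field_simp
    rw [e2, abs_div, abs_of_pos hc]
    have habs : |M x * (2 * D - 1) - 2 * (D * S x)| ≤ 1 := by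
      rw [abs_le]
      constructor <;> nlinarith
    calc |M x * (2 * D - 1) - 2 * (D * S x)| / (2 * D - 1) ≤ 1 / (2 * D - 1) := by
          gcongr
    _ = 1 / (2 * D - 1) := rfl
  -- test points
  have hx1mem : ∀ i : Fin d, (fun _ : Fin d => (1:ℝ)) i ∈ Set.Icc (0:ℝ) 1 :=
    fun i => ⟨zero_le_one, le_refl 1⟩
  have hMx1 : M (fun _ => (1:ℝ)) = 1 := Finset.sup'_const _ 1
  have hSx1 : S (fun _ => (1:ℝ)) = 1 := by
    rw [hS' _, show (∑ k : Fin d, (Finset.univ.erase k).sup' (herase k) (fun _ => (1:ℝ)))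
        = ∑ _k : Fin d, (1:ℝ) from Finset.sum_congr rfl fun k _ => Finset.sup'_const _ 1]
    rw [Finset.sum_const, Finset.card_univ, Fintype.card_fin, nsmul_eq_mul]
    field_simp
    exact hDdef.symm
  set i0 : Fin d := ⟨0, hd0⟩ with hi0def
  set x0 : Fin d → ℝ := fun i => if i = i0 then 1 else 0 with hx0def
  have hx0mem : ∀ i : Fin d, x0 i ∈ Set.Icc (0:ℝ) 1 := by
    intro i
    simp only [hx0def]
    split_ifs <;> constructor <;> norm_num
  have hMx0 : M x0 = 1 := by
    apply le_antisymm
    · exact Finset.sup'_le _ _ fun i _ => by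
        simp only [hx0def]; split_ifs <;> norm_num
    · calc (1:ℝ) = x0 i0 := by simp [hx0def]
      _ ≤ M x0 := Finset.le_sup' x0 (Finset.mem_univ i0)
  have hcard0 : (((Finset.univ : Finset (Fin d)).erase i0).card : ℝ) = D - 1 := by
    rw [Finset.card_erase_of_mem (Finset.mem_univ _), Finset.card_univ, Fintype.card_fin,
      Nat.cast_sub (by omega : 1 ≤ d)]
    simp [hDdef]
  have hSx0 : S x0 = (D - 1) / D := by
    have h0 : (Finset.univ.erase i0).sup' (herase i0) x0 = 0 := by
      apply le_antisymm
      · exact Finset.sup'_le _ _ fun j hj => by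
          simp [hx0def, (Finset.mem_erase.mp hj).1]
      · obtain ⟨j, hj⟩ := herase i0
        refine le_trans ?_ (Finset.le_sup' x0 hj)
        simp [hx0def, (Finset.mem_erase.mp hj).1]
    have h1 : ∀ k ∈ Finset.univ.erase i0,
        (Finset.univ.erase k).sup' (herase k) x0 = 1 := by
      intro k hk
      apply le_antisymm
      · exact Finset.sup'_le _ _ fun j _ => by
          simp only [hx0def]; split_ifs <;> norm_num
      · have hmem : i0 ∈ Finset.univ.erase k :=
          Finset.mem_erase.mpr ⟨Ne.symm (Finset.mem_erase.mp hk).1, Finset.mem_univ _⟩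
        calc (1:ℝ) = x0 i0 := by simp [hx0def]
        _ ≤ _ := Finset.le_sup' x0 hmem
    rw [hS' _, ← Finset.add_sum_erase _ _ (Finset.mem_univ i0), h0,
      Finset.sum_congr rfl h1, zero_add, Finset.sum_const, nsmul_eq_mul, hcard0]
    field_simp
  haveI : Nonempty {x : Fin d → ℝ // ∀ i, x i ∈ Set.Icc (0:ℝ) 1} :=
    ⟨⟨fun _ => 0, fun i => ⟨le_refl _, zero_le_one⟩⟩⟩
  have hbdd : ∀ β : ℝ, BddAbove (Set.range fun x : {x : Fin d → ℝ // ∀ i, x i ∈ Set.Icc (0:ℝ) 1}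
      => |M x.1 - β * S x.1|) := by
    intro β
    refine ⟨1 + |β|, ?_⟩
    rintro y ⟨x, rfl⟩
    obtain ⟨hM0, hM1, hS0, hS1, -, -⟩ := hfacts x.1 x.2
    have h := abs_sub (M x.1) (β * S x.1)
    rw [abs_mul] at h
    have h2 : |M x.1| = M x.1 := abs_of_nonneg hM0
    have h3 : |S x.1| = S x.1 := abs_of_nonneg hS0
    rw [h2, h3] at h
    nlinarith [abs_nonneg β]
  constructor
  · intro β
    rw [hE' β]
    rcases le_or_gt (2 * D / (2 * D - 1)) β with hβ | hβ
    · have hq : 2 * D / (2 * D - 1) = 1 + 1 / (2 * D - 1) := by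
        field_simp
        ring
      have h1 : 1 / (2 * D - 1) ≤ |M (fun _ => (1:ℝ)) - β * S (fun _ => (1:ℝ))| := by
        rw [hMx1, hSx1, mul_one]
        have : 1 - β ≤ -(1 / (2 * D - 1)) := by rw [hq] at hβ; linarith
        calc 1 / (2 * D - 1) ≤ -(1 - β) := by linarith
        _ ≤ |1 - β| := neg_le_abs _
      exact le_trans h1 (le_ciSup (hbdd β) ⟨fun _ => 1, hx1mem⟩)
    · have h1 : 1 / (2 * D - 1) ≤ |M x0 - β * S x0| := by
        rw [hMx0, hSx0]
        have hpos : (0:ℝ) < (D - 1) / D := div_pos (by linarith) hDpos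
        have hβD : β * ((D - 1) / D) < (2 * D / (2 * D - 1)) * ((D - 1) / D) :=
          mul_lt_mul_of_pos_right hβ hpos
        have hq : (2 * D / (2 * D - 1)) * ((D - 1) / D) = 1 - 1 / (2 * D - 1) := by
          field_simp
          ring
        have : 1 / (2 * D - 1) ≤ 1 - β * ((D - 1) / D) := by
          rw [hq] at hβD; linarith
        exact le_trans this (le_abs_self _)
      exact le_trans h1 (le_ciSup (hbdd β) ⟨x0, hx0mem⟩)
  · rw [hE']
    apply le_antisymm
    · exact ciSup_le fun x => hmain x.1 x.2
    · have heq : 1 / (2 * D - 1) =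
          |M (fun _ => (1:ℝ)) - (2 * D / (2 * D - 1)) * S (fun _ => (1:ℝ))| := by
        rw [hMx1, hSx1, mul_one,
          show (1:ℝ) - 2 * D / (2 * D - 1) = -(1 / (2 * D - 1)) by field_simp; ring,
          abs_neg, abs_of_pos (by positivity)]
      rw [heq]
      exact le_ciSup (hbdd _) ⟨fun _ => 1, hx1mem⟩
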